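/- Let n ≥ 2 and let 1 = d_1 < d_2 < ⋯ < d_r = n be all the (positive) divisors of n. Then for every k with 1 ≤ k < r, in the Laurent polynomial ring L = ℚ[q, q^{−1}] the ideal generated by the Gaussian binomials [n choose d_1]_q, [n choose d_2]_q, …, [n choose d_k]_q equals the principal ideal generated by the product ∏_{j=k+1}^{r} φ_{d_j}(q) of the cyclotomic polynomials indexed by the remaining divisors of n. -/

import Mathlib

/-!
STATEMENT 11: Let 1 = d_1 < ⋯ < d_r = n be the divisors of n.  For 1 ≤ k < r, in
L = ℚ[q,q⁻¹] the ideal ([n choose d_1]_q, …, [n choose d_k]_q) equals the principal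
ideal (∏_{j=k+1}^{r} φ_{d_j}(q)).  (We describe the first k divisors as the divisors
d ≤ m, where m = d_k is any divisor of n with m < n, and characterize the Gaussian
binomial g d = [n choose d]_q by the identity g d · [d]_q! · [n−d]_q! = [n]_q!.)
-/

open Polynomial

/-- The q-analogue `[m]_q = 1 + q + ⋯ + q^{m−1}` in `ℚ[q]`. -/
noncomputable def qInt (m : ℕ) : ℚ[X] := ∑ j ∈ Finset.range m, (X : ℚ[X]) ^ j

/-- The q-factorial `[n]_q! = ∏_{i=1}^{n} [i]_q` in `ℚ[q]`. -/
noncomputable def qFact (n : ℕ) : ℚ[X] := ∏ i ∈ Finset.range n, qInt (i + 1)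

private lemma sub_div_eq {n h d : ℕ} (hh : h ∣ n) (hd1 : 1 ≤ d) (hdh : d ≤ h) (hhn : h ≤ n) :
    (n - d) / h = n / h - 1 := by
  obtain ⟨t, rfl⟩ := hh
  have h0 : 0 < h := hd1.trans hdh
  have ht : 1 ≤ t := Nat.le_of_mul_le_mul_left (by simpa using hhn) h0
  have key : (h * t - d) / h = t - 1 := by
    apply Nat.div_eq_of_lt_le
    · calc (t - 1) * h = t * h - h := by rw [Nat.sub_mul, one_mul]
        _ ≤ t * h - d := Nat.sub_le_sub_left hdh _
        _ = h * t - d := by rw [mul_comm]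
    · rw [show t - 1 + 1 = t by omega]
      calc h * t - d < h * t := Nat.sub_lt (Nat.mul_pos h0 ht) hd1
        _ = t * h := mul_comm _ _
  rw [key, Nat.mul_div_cancel_left t h0]

private lemma exp_eq_one {n d h : ℕ} (hh : h ∣ n) (hn : 0 < n) (hd1 : 1 ≤ d) (hdh : d < h) :
    n / h - d / h - (n - d) / h = 1 := by
  have h0 : 0 < h := by omega
  have hhn : h ≤ n := Nat.le_of_dvd hn hh
  have h1 : 1 ≤ n / h := (Nat.one_le_div_iff h0).mpr hhn
  rw [Nat.div_eq_of_lt hdh, sub_div_eq hh hd1 hdh.le hhn]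
  omega

private lemma exp_self {n h : ℕ} (hh : h ∣ n) (hn : 0 < n) (h1 : 1 ≤ h) :
    n / h - h / h - (n - h) / h = 0 := by
  rw [Nat.div_self (by omega), sub_div_eq hh h1 le_rfl (Nat.le_of_dvd hn hh)]
  omega

private lemma exp_one_zero {n h : ℕ} (hh : ¬ h ∣ n) (hn : 1 ≤ n) (h1 : 1 < h) :
    n / h - 1 / h - (n - 1) / h = 0 := by
  have hs := @Nat.succ_div (n - 1) h
  rw [show n - 1 + 1 = n by omega] at hs
  rw [if_neg hh] at hs
  rw [Nat.div_eq_of_lt h1]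
  omega

private lemma div_add_div_le {d n h : ℕ} (hd : d ≤ n) : d / h + (n - d) / h ≤ n / h := by
  rcases Nat.eq_zero_or_pos h with rfl | h0
  · simp
  rw [Nat.le_div_iff_mul_le h0, add_mul]
  have := Nat.div_mul_le_self d h
  have := Nat.div_mul_le_self (n - d) h
  omega

private lemma prod_Ioc_extend {M N : ℕ} (hMN : M ≤ N) (f : ℕ → ℕ)
    (hf : ∀ h, M < h → f h = 0) :
    ∏ h ∈ Finset.Ioc 1 M, cyclotomic h ℚ ^ f h
      = ∏ h ∈ Finset.Ioc 1 N, cyclotomic h ℚ ^ f h := by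
  refine Finset.prod_subset (fun x hx => ?_) (fun h hh hnh => ?_)
  · simp only [Finset.mem_Ioc] at hx ⊢
    omega
  · simp only [Finset.mem_Ioc] at hh hnh
    rw [hf h (by omega), pow_zero]

private lemma qInt_eq {N : ℕ} (h : 0 < N) :
    qInt N = ∏ i ∈ N.divisors.erase 1, cyclotomic i ℚ := by
  rw [qInt, prod_cyclotomic_eq_geom_sum h]

private lemma qFact_eq (N : ℕ) :
    qFact N = ∏ h ∈ Finset.Ioc 1 N, cyclotomic h ℚ ^ (N / h) := by
  induction N with
  | zero => simp [qFact]
  | succ N ih =>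
    have h1 : qFact (N + 1) = qFact N * qInt (N + 1) := Finset.prod_range_succ _ _
    rw [h1, ih, qInt_eq (Nat.succ_pos N)]
    have key : ∀ h ∈ Finset.Ioc 1 (N + 1),
        cyclotomic h ℚ ^ ((N + 1) / h)
          = cyclotomic h ℚ ^ (N / h) * (if h ∣ N + 1 then cyclotomic h ℚ else 1) := by
      intro h hh
      rw [Nat.succ_div]
      split <;> simp [pow_add]
    rw [show ∏ h ∈ Finset.Ioc 1 (N + 1), cyclotomic h ℚ ^ ((N + 1) / h)
        = ∏ h ∈ Finset.Ioc 1 (N + 1),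
            (cyclotomic h ℚ ^ (N / h) * (if h ∣ N + 1 then cyclotomic h ℚ else 1))
      from Finset.prod_congr rfl key, Finset.prod_mul_distrib]
    congr 1
    · exact prod_Ioc_extend (by omega : N ≤ N + 1) (fun h => N / h)
        (fun h hh => Nat.div_eq_of_lt hh)
    · rw [← Finset.prod_filter (fun h => h ∣ N + 1) (fun h => cyclotomic h ℚ)]
      apply Finset.prod_congr _ (fun _ _ => rfl)
      ext a
      simp only [Finset.mem_filter, Finset.mem_Ioc, Nat.mem_divisors, Finset.mem_erase]
      constructor
      · rintro ⟨h1, h2, -⟩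
        have := Nat.le_of_dvd (Nat.succ_pos N) h2
        have := Nat.pos_of_dvd_of_pos h2 (Nat.succ_pos N)
        exact ⟨⟨by omega, by omega⟩, h2⟩
      · rintro ⟨⟨h1, -⟩, h2⟩
        exact ⟨by omega, h2, Nat.succ_ne_zero N⟩

private lemma qFact_ne_zero (N : ℕ) : qFact N ≠ 0 := by
  rw [qFact_eq]
  exact Finset.prod_ne_zero_iff.mpr fun h _ => pow_ne_zero _ (cyclotomic_ne_zero h ℚ)

private lemma qFact_mul {n d : ℕ} (hd : d ≤ n) :
    qFact d * qFact (n - d) * ∏ h ∈ Finset.Ioc 1 n, cyclotomic h ℚ ^ (n / h - d / h - (n - d) / h)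
      = qFact n := by
  rw [qFact_eq d, qFact_eq (n - d), qFact_eq n]
  have e1 : ∏ h ∈ Finset.Ioc 1 d, cyclotomic h ℚ ^ (d / h)
      = ∏ h ∈ Finset.Ioc 1 n, cyclotomic h ℚ ^ (d / h) :=
    prod_Ioc_extend hd _ (fun h hh => Nat.div_eq_of_lt hh)
  have e2 : ∏ h ∈ Finset.Ioc 1 (n - d), cyclotomic h ℚ ^ ((n - d) / h)
      = ∏ h ∈ Finset.Ioc 1 n, cyclotomic h ℚ ^ ((n - d) / h) :=
    prod_Ioc_extend (by omega) _ (fun h hh => Nat.div_eq_of_lt hh)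
  rw [e1, e2, ← Finset.prod_mul_distrib, ← Finset.prod_mul_distrib]
  refine Finset.prod_congr rfl fun h hh => ?_
  rw [← pow_add, ← pow_add]
  congr 1
  have := div_add_div_le (n := n) (d := d) (h := h) hd
  omega

private noncomputable def GB (n d : ℕ) : ℚ[X] :=
  ∏ h ∈ Finset.Ioc 1 n, cyclotomic h ℚ ^ (n / h - d / h - (n - d) / h)

private noncomputable def BB (n m d : ℕ) : ℚ[X] :=
  ∏ h ∈ Finset.Ioc 1 n, cyclotomic h ℚ ^
    ((n / h - d / h - (n - d) / h) - if h ∣ n ∧ m < h then 1 else 0)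

private noncomputable def PP (n m : ℕ) : ℚ[X] :=
  ∏ d ∈ n.divisors.filter (fun d => m < d), cyclotomic d ℚ

private lemma PP_eq {n m : ℕ} (hn : 2 ≤ n) (hm1 : 1 ≤ m) :
    PP n m = ∏ h ∈ Finset.Ioc 1 n, cyclotomic h ℚ ^ (if h ∣ n ∧ m < h then 1 else 0) := by
  have h1 : ∏ h ∈ Finset.Ioc 1 n, cyclotomic h ℚ ^ (if h ∣ n ∧ m < h then 1 else 0)
      = ∏ h ∈ (Finset.Ioc 1 n).filter (fun h => h ∣ n ∧ m < h), cyclotomic h ℚ := by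
    rw [Finset.prod_filter]
    exact Finset.prod_congr rfl fun h _ => by split <;> simp
  rw [h1, PP]
  congr 1
  ext a
  simp only [Finset.mem_filter, Nat.mem_divisors, Finset.mem_Ioc]
  constructor
  · rintro ⟨⟨ha, -⟩, hma⟩
    have := Nat.le_of_dvd (by omega) ha
    exact ⟨⟨by omega, this⟩, ha, hma⟩
  · rintro ⟨⟨-, -⟩, ha, hma⟩
    exact ⟨⟨ha, by omega⟩, hma⟩

private lemma GB_eq_PP_mul_BB {n m d : ℕ} (hn : 2 ≤ n) (hm1 : 1 ≤ m)
    (hd : d ∣ n) (hdm : d ≤ m) :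
    GB n d = PP n m * BB n m d := by
  have hd1 : 1 ≤ d := Nat.pos_of_dvd_of_pos hd (by omega)
  rw [PP_eq hn hm1, BB, GB, ← Finset.prod_mul_distrib]
  refine Finset.prod_congr rfl fun h hh => ?_
  rw [← pow_add]
  congr 1
  by_cases hc : h ∣ n ∧ m < h
  · rw [if_pos hc, exp_eq_one hc.1 (by omega) hd1 (by omega)]
  · rw [if_neg hc]
    omega

private lemma BB_one_eq {n m : ℕ} (hn : 2 ≤ n) (hm1 : 1 ≤ m) :
    BB n m 1 = ∏ h ∈ (Finset.Ioc 1 n).filter (fun h => h ∣ n ∧ h ≤ m), cyclotomic h ℚ := by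
  rw [BB, Finset.prod_filter]
  refine Finset.prod_congr rfl fun h hh => ?_
  simp only [Finset.mem_Ioc] at hh
  by_cases hdvd : h ∣ n
  · have he : n / h - 1 / h - (n - 1) / h = 1 := exp_eq_one hdvd (by omega) le_rfl hh.1
    by_cases hhm : h ≤ m
    · rw [if_neg (fun hc => absurd hc.2 (by omega) : ¬(h ∣ n ∧ m < h)), Nat.sub_zero, he,
        pow_one, if_pos ⟨hdvd, hhm⟩]
    · rw [if_pos ⟨hdvd, by omega⟩, he, if_neg (fun hc => absurd hc.2 (by omega) : ¬(h ∣ n ∧ h ≤ m))]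
      simp
  · have he : n / h - 1 / h - (n - 1) / h = 0 := exp_one_zero hdvd (by omega) hh.1
    rw [if_neg (fun hc => hdvd hc.1 : ¬(h ∣ n ∧ m < h)), he,
      if_neg (fun hc => hdvd hc.1 : ¬(h ∣ n ∧ h ≤ m))]
    simp

private lemma BB_not_dvd {n m h : ℕ} (hn : 2 ≤ n) (hh : h ∣ n) (h1 : 1 < h) (hhm : h ≤ m) :
    ¬ cyclotomic h ℚ ∣ BB n m h := by
  intro hdvd
  have hirr : Irreducible (cyclotomic h ℚ) := cyclotomic.irreducible_rat (by omega)
  have hp : Prime (cyclotomic h ℚ) := hirr.prime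
  rw [BB] at hdvd
  obtain ⟨h', hh', hdvd'⟩ := hp.exists_mem_finset_dvd hdvd
  by_cases hEq : h' = h
  · subst hEq
    rw [exp_self hh (by omega) (by omega), if_neg (by omega : ¬(h' ∣ n ∧ m < h')),
      Nat.sub_zero, pow_zero] at hdvd'
    exact hp.not_unit (isUnit_of_dvd_one hdvd')
  · have : cyclotomic h ℚ ∣ cyclotomic h' ℚ := hp.dvd_of_dvd_pow hdvd'
    exact hp.not_unit
      ((cyclotomic.isCoprime_rat (fun he => hEq he.symm)).isUnit_of_dvd' dvd_rfl this)

private lemma BB_ne_zero (n m d : ℕ) : BB n m d ≠ 0 := by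
  rw [BB]
  exact Finset.prod_ne_zero_iff.mpr fun h _ => pow_ne_zero _ (cyclotomic_ne_zero h ℚ)

private lemma BB_span {n m : ℕ} (hn : 2 ≤ n) (hm : m ∣ n) (hm1 : 1 ≤ m) :
    Ideal.span ((fun d => BB n m d) '' {d : ℕ | d ∣ n ∧ d ≤ m}) = ⊤ := by
  by_contra hne
  obtain ⟨M, hmax, hle⟩ := Ideal.exists_le_maximal _ hne
  haveI := hmax.isPrime
  have hmem : ∀ d : ℕ, d ∣ n → d ≤ m → BB n m d ∈ M := fun d hd hdm =>
    hle (Ideal.subset_span ⟨d, ⟨hd, hdm⟩, rfl⟩)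
  have hdvd : ∀ d : ℕ, d ∣ n → d ≤ m →
      Submodule.IsPrincipal.generator (M : Ideal ℚ[X]) ∣ BB n m d := fun d hd hdm =>
    (Submodule.IsPrincipal.mem_iff_generator_dvd M).mp (hmem d hd hdm)
  have hMbot : M ≠ ⊥ := by
    intro hbot
    exact BB_ne_zero n m 1 (by simpa [hbot] using hmem 1 (one_dvd n) hm1)
  have hπ : Prime (Submodule.IsPrincipal.generator (M : Ideal ℚ[X])) :=
    Submodule.IsPrincipal.prime_generator_of_isPrime M hMbot
  have h1 := hdvd 1 (one_dvd n) hm1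
  rw [BB_one_eq hn hm1] at h1
  obtain ⟨h, hhT, hπφ⟩ := hπ.exists_mem_finset_dvd h1
  simp only [Finset.mem_filter, Finset.mem_Ioc] at hhT
  obtain ⟨⟨hh1, hhn⟩, hhd, hhm⟩ := hhT
  have hirr : Irreducible (cyclotomic h ℚ) := cyclotomic.irreducible_rat (by omega)
  have hassoc : Associated (Submodule.IsPrincipal.generator (M : Ideal ℚ[X]))
      (cyclotomic h ℚ) := hπ.irreducible.associated_of_dvd hirr hπφ
  exact BB_not_dvd hn hhd hh1 hhm (hassoc.symm.dvd.trans (hdvd h hhd hhm))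

open Pointwise in
theorem gaussian_binomial_divisor_ideal
    (n : ℕ) (hn : 2 ≤ n) (m : ℕ) (hm : m ∣ n) (hmn : m < n)
    (g : ℕ → LaurentPolynomial ℚ)
    (hg : ∀ d : ℕ, d ∣ n →
      g d * ((qFact d).toLaurent * (qFact (n - d)).toLaurent) = (qFact n).toLaurent) :
    Ideal.span {x : LaurentPolynomial ℚ | ∃ d : ℕ, d ∣ n ∧ d ≤ m ∧ x = g d} =
      Ideal.span {(∏ d ∈ n.divisors.filter (fun d => m < d),
        (Polynomial.cyclotomic d ℚ).toLaurent : LaurentPolynomial ℚ)} := by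
  have hn0 : 0 < n := by omega
  have hm1 : 1 ≤ m := Nat.pos_of_dvd_of_pos hm hn0
  -- identify the generator of the right side
  have hP : (∏ d ∈ n.divisors.filter (fun d => m < d),
      (Polynomial.cyclotomic d ℚ).toLaurent : LaurentPolynomial ℚ) = (PP n m).toLaurent := by
    rw [PP, map_prod]
  -- identify g
  have hgG : ∀ d : ℕ, d ∣ n → g d = (GB n d).toLaurent := by
    intro d hd
    have hdn : d ≤ n := Nat.le_of_dvd hn0 hd
    have h3 : (GB n d).toLaurent * ((qFact d).toLaurent * (qFact (n - d)).toLaurent)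
        = (qFact n).toLaurent := by
      rw [← map_mul, ← map_mul]
      congr 1
      rw [← qFact_mul hdn, GB]
      ring
    have hne : ((qFact d).toLaurent * (qFact (n - d)).toLaurent) ≠ 0 :=
      mul_ne_zero (Polynomial.toLaurent_ne_zero.mpr (qFact_ne_zero d))
        (Polynomial.toLaurent_ne_zero.mpr (qFact_ne_zero (n - d)))
    exact mul_right_cancel₀ hne ((hg d hd).trans h3.symm)
  rw [hP]
  apply le_antisymm
  · rw [Ideal.span_le]
    rintro x ⟨d, hd, hdm, rfl⟩
    rw [SetLike.mem_coe, Ideal.mem_span_singleton, hgG d hd]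
    exact ⟨(BB n m d).toLaurent, by rw [← map_mul, ← GB_eq_PP_mul_BB hn hm1 hd hdm]⟩
  · rw [Ideal.span_le, Set.singleton_subset_iff, SetLike.mem_coe]
    set T : Set (LaurentPolynomial ℚ) :=
      (fun d => (BB n m d).toLaurent) '' {d : ℕ | d ∣ n ∧ d ≤ m} with hT
    have htop : Ideal.span T = ⊤ := by
      have h1 := BB_span hn hm hm1
      have h2 := Ideal.map_span (Polynomial.toLaurent (R := ℚ))
        ((fun d => BB n m d) '' {d : ℕ | d ∣ n ∧ d ≤ m})
      rw [h1, Ideal.map_top, Set.image_image] at h2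
      exact h2.symm
    have hle : Ideal.span (({(PP n m).toLaurent} : Set (LaurentPolynomial ℚ)) * T) ≤
        Ideal.span {x : LaurentPolynomial ℚ | ∃ d : ℕ, d ∣ n ∧ d ≤ m ∧ x = g d} := by
      rw [Ideal.span_le]
      rintro x hx
      rw [Set.mem_mul] at hx
      obtain ⟨p, hp, t, ht, rfl⟩ := hx
      rw [Set.mem_singleton_iff] at hp
      subst hp
      obtain ⟨d, ⟨hd, hdm⟩, rfl⟩ := ht
      refine Ideal.subset_span ⟨d, hd, hdm, ?_⟩
      rw [hgG d hd, ← map_mul, ← GB_eq_PP_mul_BB hn hm1 hd hdm]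
    refine hle ?_
    rw [← Ideal.span_mul_span', htop, Ideal.mul_top]
    exact Ideal.subset_span rfl
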